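/- Let B be a finite connected simple graph on vertex set V with m = #V ≥ 1. For every real ε ∈ (0,1) there exist a real ν₁ > 0 and n₀ ∈ ℕ such that for all n ≥ n₀ the following holds: let G be any simple graph on vertex set V × Fin n with the property that for every edge {a,b} of B there exists a permutation σ of Fin n with (a,i) adjacent to (b,σ(i)) in G for every i ∈ Fin n. Then every subset U ⊆ V × Fin n satisfying min_{v∈V} #U_v < (1−ε)·max_{v∈V} #U_v also satisfies #(Γ_G(U) ∖ U) ≥ ν₁·#U. -/

import Mathlib

def nbhd {W : Type*} (G : SimpleGraph W) (U : Set W) : Set W :=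
  {w | ∃ u ∈ U, G.Adj u w}

noncomputable def fibCard {V : Type*} {n : ℕ} (U : Set (V × Fin n)) (v : V) : ℕ :=
  {i : Fin n | (v, i) ∈ U}.ncard

/-- Along a walk with a big total multiplicative drop of `f`, some edge has a drop by
factor `c`, starting from a still-large value. -/
lemma exists_drop_edge {V : Type} (B : SimpleGraph V) (f : V → ℝ) (hf : ∀ v, 0 ≤ f v)
    (c : ℝ) (hc0 : 0 < c) (hc1 : c ≤ 1) :
    ∀ {x y : V} (p : B.Walk x y), f y < c ^ p.length * f x →
      ∃ a b, B.Adj a b ∧ f b < c * f a ∧ c ^ p.length * f x ≤ f a := by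
  intro x y p
  induction p with
  | nil =>
    intro hlt
    rw [SimpleGraph.Walk.length_nil, pow_zero, one_mul] at hlt
    exact absurd hlt (lt_irrefl _)
  | @cons x x' y h q ih =>
    intro hlt
    rw [SimpleGraph.Walk.length_cons] at hlt ⊢
    by_cases hx' : f x' < c * f x
    · refine ⟨x, x', h, hx', ?_⟩
      calc c ^ (q.length + 1) * f x ≤ 1 * f x := by
            apply mul_le_mul_of_nonneg_right _ (hf x)
            exact pow_le_one₀ hc0.le hc1
        _ = f x := one_mul _
    · push_neg at hx'
      have hq : f y < c ^ q.length * f x' := by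
        calc f y < c ^ (q.length + 1) * f x := hlt
          _ = c ^ q.length * (c * f x) := by ring
          _ ≤ c ^ q.length * f x' := by
            exact mul_le_mul_of_nonneg_left hx' (pow_nonneg hc0.le _)
      obtain ⟨a, b, hab, hdrop, hbig⟩ := ih hq
      refine ⟨a, b, hab, hdrop, ?_⟩
      calc c ^ (q.length + 1) * f x = c ^ q.length * (c * f x) := by ring
        _ ≤ c ^ q.length * f x' := mul_le_mul_of_nonneg_left hx' (pow_nonneg hc0.le _)
        _ ≤ f a := hbig

lemma ncard_eq_sum_fibCard {V : Type} [Fintype V] [DecidableEq V] {n : ℕ}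
    (U : Set (V × Fin n)) : U.ncard = ∑ v : V, fibCard U v := by
  classical
  rw [Set.ncard_eq_toFinset_card' U]
  rw [Finset.card_eq_sum_card_fiberwise (f := Prod.fst) (t := Finset.univ)
    (fun x _ => Finset.mem_univ _)]
  refine Finset.sum_congr rfl fun v _ => ?_
  rw [fibCard, Set.ncard_eq_toFinset_card']
  apply Finset.card_nbij' (fun x => x.2) (fun i => (v, i))
  · intro x hx
    simp only [Finset.mem_coe, Finset.mem_filter, Set.mem_toFinset] at hx ⊢
    obtain ⟨h1, h2⟩ := hx
    simpa [← h2] using h1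
  · intro i hi
    simp only [Finset.mem_coe, Set.mem_toFinset, Set.mem_setOf_eq] at hi
    simp [hi]
  · intro x hx
    simp only [Finset.mem_coe, Finset.mem_filter, Set.mem_toFinset] at hx
    exact Prod.ext hx.2.symm rfl
  · intro i _
    rfl

theorem almost_equal_fibres
    {V : Type} [Fintype V] [DecidableEq V] [Nonempty V]
    (B : SimpleGraph V) (hconn : B.Connected)
    (ε : ℝ) (hε0 : 0 < ε) (hε1 : ε < 1) :
    ∃ ν₁ : ℝ, 0 < ν₁ ∧ ∃ n₀ : ℕ, ∀ n : ℕ, n₀ ≤ n →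
      ∀ G : SimpleGraph (V × Fin n),
        (∀ a b : V, B.Adj a b → ∃ σ : Equiv.Perm (Fin n), ∀ i : Fin n, G.Adj (a, i) (b, σ i)) →
        ∀ U : Set (V × Fin n),
          ((Finset.univ.inf' Finset.univ_nonempty (fun v => fibCard U v) : ℝ) <
            (1 - ε) * (Finset.univ.sup' Finset.univ_nonempty (fun v => fibCard U v) : ℝ)) →
          ν₁ * (U.ncard : ℝ) ≤ (((nbhd G U) \ U).ncard : ℝ) := by
  classical
  set m : ℕ := Fintype.card V with hm
  have hm1 : 1 ≤ m := Fintype.card_pos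
  have hε1' : (0:ℝ) < 1 - ε := by linarith
  set c : ℝ := (1 - ε) ^ ((m : ℝ)⁻¹) with hc
  have hmpos : (0:ℝ) < m := by exact_mod_cast hm1
  have hc0 : 0 < c := Real.rpow_pos_of_pos hε1' _
  have hc1 : c < 1 := by
    apply Real.rpow_lt_one hε1'.le (by linarith) (inv_pos.mpr hmpos)
  have hck : ∀ k : ℕ, k ≤ m → 1 - ε ≤ c ^ k := by
    intro k hk
    have : c ^ k = (1 - ε) ^ ((m : ℝ)⁻¹ * k) := by
      rw [hc, ← Real.rpow_natCast ((1 - ε) ^ ((m:ℝ)⁻¹)) k, ← Real.rpow_mul hε1'.le]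
    rw [this]
    nth_rewrite 1 [show (1 - ε) = (1 - ε) ^ (1:ℝ) by rw [Real.rpow_one]]
    apply Real.rpow_le_rpow_of_exponent_ge hε1' (by linarith)
    rw [inv_mul_le_iff₀ hmpos, mul_one]
    exact_mod_cast hk
  have h1c : (0:ℝ) < 1 - c := by linarith
  refine ⟨(1 - c) * (1 - ε) / m, div_pos (mul_pos h1c hε1') hmpos, 0,
    fun n _ G hG U hU => ?_⟩
  -- max and min fibre vertices
  obtain ⟨vmax, -, hvmax⟩ := Finset.exists_mem_eq_sup' Finset.univ_nonempty
    (fun v => (fibCard U v : ℝ))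
  obtain ⟨vmin, -, hvmin⟩ := Finset.exists_mem_eq_inf' Finset.univ_nonempty
    (fun v => (fibCard U v : ℝ))
  set M : ℕ := fibCard U vmax with hM
  have hle : ∀ v, (fibCard U v : ℝ) ≤ (M : ℝ) := by
    intro v
    rw [← hvmax]
    exact Finset.le_sup' (fun v => (fibCard U v : ℝ)) (Finset.mem_univ v)
  have hmin : (fibCard U vmin : ℝ) < (1 - ε) * M := by
    rw [← hvmax, ← hvmin]; exact hU
  -- path from vmax to vmin
  obtain ⟨w⟩ := hconn.preconnected vmax vmin
  set p := w.toPath.val with hp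
  have hplen : p.length < m := SimpleGraph.Walk.IsPath.length_lt w.toPath.prop
  have hckp : 1 - ε ≤ c ^ p.length := hck _ hplen.le
  have hMnn : (0:ℝ) ≤ (M:ℝ) := Nat.cast_nonneg _
  obtain ⟨a, b, hab, hdrop, hbig⟩ := exists_drop_edge B (fun v => (fibCard U v : ℝ))
    (fun v => Nat.cast_nonneg _) c hc0 hc1.le p
    (by
      calc ((fibCard U vmin : ℝ)) < (1 - ε) * M := hmin
        _ ≤ c ^ p.length * M := by apply mul_le_mul_of_nonneg_right hckp hMnn)
  have hbig' : (1 - ε) * M ≤ (fibCard U a : ℝ) := by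
    calc (1 - ε) * M ≤ c ^ p.length * M := mul_le_mul_of_nonneg_right hckp hMnn
      _ ≤ (fibCard U a : ℝ) := hbig
  obtain ⟨σ, hσ⟩ := hG a b hab
  -- fibre of nbhd over b is at least fibre of U over a
  have h1 : (fibCard U a : ℝ) ≤ (fibCard (nbhd G U) b : ℝ) := by
    have hsub : σ '' {i : Fin n | (a, i) ∈ U} ⊆ {j : Fin n | (b, j) ∈ nbhd G U} := by
      rintro j ⟨i, hi, rfl⟩
      exact ⟨(a, i), hi, hσ i⟩
    have := Set.ncard_le_ncard hsub (Set.toFinite _)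
    rw [Set.ncard_image_of_injective _ σ.injective] at this
    exact_mod_cast this
  -- counting in the fibre over b
  set T : Set (Fin n) := {j : Fin n | (b, j) ∈ nbhd G U} \ {j : Fin n | (b, j) ∈ U} with hT
  have h2 : (fibCard (nbhd G U) b : ℝ) ≤ (T.ncard : ℝ) + (fibCard U b : ℝ) := by
    have hsub : {j : Fin n | (b, j) ∈ nbhd G U} ⊆ T ∪ {j : Fin n | (b, j) ∈ U} := by
      intro j hj
      by_cases h : (b, j) ∈ U
      · exact Or.inr h
      · exact Or.inl ⟨hj, h⟩
    have := (Set.ncard_le_ncard hsub (Set.toFinite _)).trans (Set.ncard_union_le _ _)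
    exact_mod_cast this
  have h3 : (T.ncard : ℝ) ≤ (((nbhd G U) \ U).ncard : ℝ) := by
    have hinj : Function.Injective (fun j : Fin n => ((b, j) : V × Fin n)) := by
      intro i j hij
      simpa using (Prod.ext_iff.mp hij).2
    have hsub : (fun j : Fin n => ((b, j) : V × Fin n)) '' T ⊆ (nbhd G U) \ U := by
      rintro x ⟨j, ⟨hj1, hj2⟩, rfl⟩
      exact ⟨hj1, hj2⟩
    have := Set.ncard_le_ncard hsub (Set.toFinite _)
    rw [Set.ncard_image_of_injective _ hinj] at this
    exact_mod_cast this
  -- total size of U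
  have hUcard : (U.ncard : ℝ) ≤ m * M := by
    rw [ncard_eq_sum_fibCard U]
    push_cast
    calc ∑ v : V, (fibCard U v : ℝ) ≤ ∑ _v : V, (M : ℝ) := by
          apply Finset.sum_le_sum; intro v _; exact hle v
      _ = m * M := by rw [Finset.sum_const]; simp [hm]
  -- finish
  have key : (1 - c) * (fibCard U a : ℝ) ≤ (((nbhd G U) \ U).ncard : ℝ) := by
    have : (fibCard U a : ℝ) - (fibCard U b : ℝ) ≤ (((nbhd G U) \ U).ncard : ℝ) := by
      linarith
    nlinarith [Nat.cast_nonneg (α := ℝ) (fibCard U a)]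
  have hfa : (1 - c) * ((1 - ε) * M) ≤ (1 - c) * (fibCard U a : ℝ) := by
    apply mul_le_mul_of_nonneg_left hbig' (by linarith)
  calc (1 - c) * (1 - ε) / m * (U.ncard : ℝ) ≤ (1 - c) * (1 - ε) / m * (m * M) := by
        apply mul_le_mul_of_nonneg_left hUcard
          (div_nonneg (mul_nonneg h1c.le hε1'.le) hmpos.le)
    _ = (1 - c) * ((1 - ε) * M) := by field_simp
    _ ≤ (((nbhd G U) \ U).ncard : ℝ) := le_trans hfa key
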